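/- arXiv:2104.07432 — 5 statements merged into one kernel-verified Lean document; each statement's English description precedes it below -/
import Mathlib

section
/- Let C be a Hermitian LCD [n,k] code over F_{q^2} with k ≥ 1. Then C has a generator matrix whose first row x satisfies (x,x)_h ≠ 0 and x is Hermitian-orthogonal to all remaining rows; moreover, the code generated by the remaining k−1 rows is a Hermitian LCD [n,k−1] code. -/
open Finset Matrix

/-- The Hermitian inner product `(x, y)_h = ∑ i, x i * (y i)^q` on `F^n`. -/
def hermInner {F : Type*} [Field F] (q : ℕ) {n : ℕ} (x y : Fin n → F) : F :=
  ∑ i, x i * (y i) ^ q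

/-- The Hermitian dual code `C^{⊥h}`. -/
def hermDual {F : Type*} [Field F] (q : ℕ) {n : ℕ} (C : Submodule F (Fin n → F)) :
    Submodule F (Fin n → F) where
  carrier := {x | ∀ y ∈ C, hermInner q x y = 0}
  add_mem' := by
    intro a b ha hb y hy
    have h1 := ha y hy
    have h2 := hb y hy
    simp only [hermInner] at *
    rw [show (∑ i, (a + b) i * y i ^ q)
        = (∑ i, a i * y i ^ q) + ∑ i, b i * y i ^ q by
      rw [← Finset.sum_add_distrib]
      exact Finset.sum_congr rfl fun i _ => by simp [add_mul]]
    rw [h1, h2, add_zero]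
  zero_mem' := by
    intro y hy
    simp [hermInner]
  smul_mem' := by
    intro c a ha y hy
    have h1 := ha y hy
    simp only [hermInner] at *
    rw [show (∑ i, (c • a) i * y i ^ q) = c * ∑ i, a i * y i ^ q by
      rw [Finset.mul_sum]
      exact Finset.sum_congr rfl fun i _ => by simp [mul_assoc]]
    rw [h1, mul_zero]

/-- A code is Hermitian LCD if `C ∩ C^{⊥h} = {0}`. -/
def IsHermLCD {F : Type*} [Field F] (q : ℕ) {n : ℕ} (C : Submodule F (Fin n → F)) : Prop :=
  C ⊓ hermDual q C = ⊥

/-- Hamming weight: number of nonzero coordinates. -/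
noncomputable def wt {F : Type*} [Field F] {n : ℕ} (x : Fin n → F) : ℕ :=
  Nat.card {i // x i ≠ 0}

/-- `C` has minimum weight `d`. -/
def minWt {F : Type*} [Field F] {n : ℕ} (C : Submodule F (Fin n → F)) (d : ℕ) : Prop :=
  (∃ c ∈ C, c ≠ 0 ∧ wt c = d) ∧ ∀ c ∈ C, c ≠ 0 → d ≤ wt c

/-- The Hermitian dual distance of `C` is at least 2. -/
def dualDistGeTwo {F : Type*} [Field F] (q : ℕ) {n : ℕ} (C : Submodule F (Fin n → F)) : Prop :=
  ∀ x ∈ hermDual q C, x ≠ 0 → 2 ≤ wt x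

/-- The Hermitian dual distance of `C` equals 1, i.e. `C^{⊥h}` contains a weight-one
vector. -/
def dualDistOne {F : Type*} [Field F] (q : ℕ) {n : ℕ} (C : Submodule F (Fin n → F)) : Prop :=
  ∃ x ∈ hermDual q C, wt x = 1


section Aux

variable {F : Type*} [Field F]

lemma hermInner_add_left (q : ℕ) {n : ℕ} (x y z : Fin n → F) :
    hermInner q (x + y) z = hermInner q x z + hermInner q y z := by
  simp [hermInner, add_mul, Finset.sum_add_distrib]

lemma hermInner_smul_left (q : ℕ) {n : ℕ} (c : F) (x z : Fin n → F) :
    hermInner q (c • x) z = c * hermInner q x z := by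
  simp [hermInner, Finset.mul_sum, mul_assoc]

lemma hermInner_smul_right (q : ℕ) {n : ℕ} (c : F) (x y : Fin n → F) :
    hermInner q x (c • y) = c ^ q * hermInner q x y := by
  simp only [hermInner, Pi.smul_apply, smul_eq_mul]
  rw [Finset.mul_sum]
  refine Finset.sum_congr rfl fun i _ => ?_
  rw [mul_pow]
  ring

lemma herm_zero_left (q : ℕ) {n : ℕ} (y : Fin n → F) : hermInner q (0 : Fin n → F) y = 0 := by
  simp [hermInner]

/-- In a field with `q^2` elements, some element has nonzero "trace" `t + t^q`. -/
lemma exists_trace_ne_zero [Fintype F] {q : ℕ} (hq1 : 1 < q)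
    (hcard : Fintype.card F = q ^ 2) : ∃ t : F, t + t ^ q ≠ 0 := by
  classical
  by_contra h
  push_neg at h
  have h1 : ∀ t : F, t ^ q = -t := fun t => eq_neg_of_add_eq_zero_right (h t)
  have hone : (1 : F) = -1 := by simpa using h1 1
  have h2 : ∀ t : F, t ^ q = t := by
    intro t
    rw [h1 t, ← neg_one_mul, ← hone, one_mul]
  have hPne := FiniteField.X_pow_card_sub_X_ne_zero F hq1
  have hdeg := FiniteField.X_pow_card_sub_X_natDegree_eq F hq1
  have hroots : ∀ t : F, t ∈ (Polynomial.X ^ q - Polynomial.X : Polynomial F).roots := by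
    intro t
    rw [Polynomial.mem_roots hPne]
    simp [Polynomial.IsRoot, h2 t]
  have hle : Fintype.card F ≤ q := by
    calc Fintype.card F = (Finset.univ : Finset F).card := (Finset.card_univ).symm
      _ ≤ (Polynomial.X ^ q - Polynomial.X : Polynomial F).roots.toFinset.card :=
          Finset.card_le_card (fun t _ => Multiset.mem_toFinset.2 (hroots t))
      _ ≤ Multiset.card (Polynomial.X ^ q - Polynomial.X : Polynomial F).roots :=
          Multiset.toFinset_card_le _
      _ ≤ (Polynomial.X ^ q - Polynomial.X : Polynomial F).natDegree :=
          Polynomial.card_roots' _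
      _ = q := hdeg
  rw [hcard] at hle
  nlinarith

end Aux

/-- dimension `k ≥ 1` is written as `k + 1` -/
theorem stmt_2 {F : Type*} [Field F] [Fintype F] (q n k : ℕ) (hq : IsPrimePow q)
    (hcard : Fintype.card F = q ^ 2)
    (C : Submodule F (Fin n → F)) (hdim : Module.finrank F C = k + 1)
    (hlcd : IsHermLCD q C) :
    ∃ G : Matrix (Fin (k + 1)) (Fin n) F,
      LinearIndependent F G ∧ Submodule.span F (Set.range G) = C ∧
      hermInner q (G 0) (G 0) ≠ 0 ∧
      (∀ i : Fin k, hermInner q (G 0) (G i.succ) = 0) ∧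
      IsHermLCD q (Submodule.span F (Set.range fun i : Fin k => G i.succ)) ∧
      Module.finrank F (Submodule.span F (Set.range fun i : Fin k => G i.succ)) = k := by
  classical
  -- basic numerology
  have hq2le : 2 ≤ q := hq.two_le
  have hq1 : 1 < q := hq2le
  have hq0 : q ≠ 0 := by omega
  -- characteristic
  obtain ⟨p, j, hpP, hj, hpj⟩ := hq
  have hp' : p.Prime := hpP.nat_prime
  haveI := ringChar.charP F
  have hrprime : (ringChar F).Prime := CharP.char_is_prime F (ringChar F)
  obtain ⟨m, -, hm⟩ := FiniteField.card F (ringChar F)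
  have hrp : ringChar F = p := by
    have hdvd : ringChar F ∣ p ^ (2 * j) := by
      have he : (ringChar F) ^ (m : ℕ) = p ^ (2 * j) := by
        rw [← hm, hcard, ← hpj, ← pow_mul, mul_comm j 2]
      exact he ▸ dvd_pow_self (ringChar F) m.pos.ne'
    exact (Nat.prime_dvd_prime_iff_eq hrprime hp').1 (hrprime.dvd_of_dvd_pow hdvd)
  haveI : CharP F p := hrp ▸ ringChar.charP F
  haveI : ExpChar F p := ExpChar.prime hp'
  -- Frobenius facts
  have hadd : ∀ a b : F, (a + b) ^ q = a ^ q + b ^ q := by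
    intro a b
    have := map_add (iterateFrobenius F p j) a b
    simpa [iterateFrobenius_def, hpj] using this
  have hsum : ∀ f : Fin n → F, (∑ i, f i) ^ q = ∑ i, (f i) ^ q := by
    intro f
    have h := map_sum (iterateFrobenius F p j) f Finset.univ
    simp only [iterateFrobenius_def] at h
    rw [hpj] at h
    exact h
  have hq2' : ∀ z : F, (z ^ q) ^ q = z := by
    intro z
    rw [← pow_mul, ← sq, ← hcard, FiniteField.pow_card]
  have hconj : ∀ x y : Fin n → F, hermInner q y x = (hermInner q x y) ^ q := by
    intro x y
    calc hermInner q y x = ∑ i, y i * x i ^ q := rfl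
      _ = ∑ i, (x i * y i ^ q) ^ q := by
          refine Finset.sum_congr rfl fun i _ => ?_
          rw [mul_pow, hq2' (y i), mul_comm]
      _ = (∑ i, x i * y i ^ q) ^ q := (hsum _).symm
  have hadd_right : ∀ x y z : Fin n → F,
      hermInner q x (y + z) = hermInner q x y + hermInner q x z := by
    intro x y z
    simp only [hermInner, Pi.add_apply]
    rw [← Finset.sum_add_distrib]
    exact Finset.sum_congr rfl fun i _ => by rw [hadd, mul_add]
  -- existence of a non-isotropic vector in C
  have hxex : ∃ x ∈ C, hermInner q x x ≠ 0 := by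
    by_contra hno
    push_neg at hno
    have hzero : ∀ z ∈ C, ∀ y ∈ C, hermInner q z y = 0 := by
      intro z hz y hy
      by_contra ha
      obtain ⟨t, ht⟩ := exists_trace_ne_zero hq1 hcard
      set a := hermInner q z y with ha'
      set μ := t * a⁻¹ with hμ
      have hμa : μ * a = t := by
        rw [hμ, mul_assoc, inv_mul_cancel₀ ha, mul_one]
      have hw : μ • z + y ∈ C := C.add_mem (C.smul_mem μ hz) hy
      have h0 : hermInner q (μ • z + y) (μ • z + y) = 0 := hno _ hw
      have hzz : hermInner q z z = 0 := hno z hz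
      have hyy : hermInner q y y = 0 := hno y hy
      have hyz : hermInner q y z = a ^ q := hconj z y
      have hexp : hermInner q (μ • z + y) (μ • z + y) = μ * a + (μ * a) ^ q := by
        rw [hermInner_add_left, hermInner_smul_left, hadd_right, hadd_right,
          hermInner_smul_right, hermInner_smul_right, hzz, hyy, hyz, mul_pow]
        ring
      rw [hexp, hμa] at h0
      exact ht h0
    have hsub : C ≤ hermDual q C := fun z hz y hy => hzero z hz y hy
    have hbot : C = ⊥ := by
      have : C ≤ C ⊓ hermDual q C := le_inf le_rfl hsub
      rw [hlcd] at this
      exact le_bot_iff.1 this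
    rw [hbot] at hdim
    simp at hdim
  obtain ⟨x, hxC, hxx⟩ := hxex
  -- the linear functional y ↦ ⟨y, x⟩
  set ψ : (Fin n → F) →ₗ[F] F :=
    { toFun := fun y => hermInner q y x
      map_add' := fun a b => hermInner_add_left q a b x
      map_smul' := fun c a => hermInner_smul_left q c a x } with hψ
  have hψa : ∀ y : Fin n → F, ψ y = hermInner q y x := fun _ => rfl
  set D : Submodule F (Fin n → F) := C ⊓ LinearMap.ker ψ with hD
  have hDC : D ≤ C := inf_le_left
  have hDker : ∀ z ∈ D, hermInner q z x = 0 := fun z hz => hz.2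
  have hDmem : ∀ z, z ∈ C → hermInner q z x = 0 → z ∈ D := fun z h1 h2 => ⟨h1, h2⟩
  -- C = span {x} ⊔ D
  have hCeq : Submodule.span F {x} ⊔ D = C := by
    apply le_antisymm
    · exact sup_le ((Submodule.span_singleton_le_iff_mem x C).2 hxC) hDC
    · intro y hy
      set c := hermInner q y x / hermInner q x x with hc
      have h1 : c • x ∈ Submodule.span F ({x} : Set (Fin n → F)) :=
        Submodule.smul_mem _ c (Submodule.mem_span_singleton_self x)
      have h2 : y - c • x ∈ D := by
        refine hDmem _ (C.sub_mem hy (C.smul_mem c hxC)) ?_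
        have hlin : hermInner q (y - c • x) x = hermInner q y x - c * hermInner q x x := by
          have h3 := hermInner_add_left q (y - c • x) (c • x) x
          rw [sub_add_cancel, hermInner_smul_left] at h3
          linear_combination -h3
        rw [hlin, hc, div_mul_cancel₀ _ hxx, sub_self]
      have : y = c • x + (y - c • x) := by abel
      rw [this]
      exact Submodule.add_mem _ (Submodule.mem_sup_left h1) (Submodule.mem_sup_right h2)
  have hxne : x ≠ 0 := by
    intro h
    exact hxx (by rw [h]; exact herm_zero_left q 0)
  -- trivial intersection
  have hdisj : Submodule.span F {x} ⊓ D = ⊥ := by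
    rw [eq_bot_iff]
    rintro z ⟨hz1, hz2⟩
    obtain ⟨c, rfl⟩ := Submodule.mem_span_singleton.1 hz1
    have : c * hermInner q x x = 0 := by
      have := hDker _ hz2
      rwa [hermInner_smul_left] at this
    have hc0 : c = 0 := by
      rcases mul_eq_zero.1 this with h | h
      · exact h
      · exact absurd h hxx
    simp [hc0]
  -- dimension of D
  have hDdim : Module.finrank F D = k := by
    have hsum' := Submodule.finrank_sup_add_finrank_inf_eq (Submodule.span F {x}) D
    rw [hCeq, hdisj, hdim, finrank_span_singleton hxne] at hsum'
    simp at hsum'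
    omega
  -- D is LCD
  have hDlcd : IsHermLCD q D := by
    rw [IsHermLCD, eq_bot_iff]
    rintro z ⟨hz1, hz2⟩
    have hzx : hermInner q z x = 0 := hDker _ hz1
    have hzC : z ∈ hermDual q C := by
      intro y hy
      rw [← hCeq] at hy
      obtain ⟨u, hu, v, hv, rfl⟩ := Submodule.mem_sup.1 hy
      obtain ⟨c, rfl⟩ := Submodule.mem_span_singleton.1 hu
      rw [hadd_right, hermInner_smul_right, hzx, hz2 v hv]
      ring
    have : z ∈ C ⊓ hermDual q C := ⟨hDC hz1, hzC⟩
    rwa [hlcd] at this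
  -- basis of D
  have hfd : FiniteDimensional F D := inferInstance
  let b : Module.Basis (Fin k) F D := Module.finBasisOfFinrankEq F D hDdim
  set v : Fin k → (Fin n → F) := fun i => (b i : Fin n → F) with hv
  have hvD : ∀ i, v i ∈ D := fun i => (b i).2
  have hvind : LinearIndependent F v :=
    b.linearIndependent.map' D.subtype (Submodule.ker_subtype D)
  have hvspan : Submodule.span F (Set.range v) = D := by
    have h1 : Set.range v = D.subtype '' (Set.range ⇑b) := by
      rw [← Set.range_comp]
      rfl
    rw [h1, Submodule.span_image, Module.Basis.span_eq, Submodule.map_top, Submodule.range_subtype]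
  -- construct G
  set G : Matrix (Fin (k + 1)) (Fin n) F := Fin.cons x v with hG
  have hG0 : G 0 = x := by rw [hG]; simp
  have hGsucc : (fun i : Fin k => G i.succ) = v := by
    funext i
    rw [hG]
    simp
  refine ⟨G, ?_, ?_, ?_, ?_, ?_, ?_⟩
  · rw [hG]
    refine hvind.fin_cons ?_
    rw [hvspan]
    intro hxD
    exact hxx (hDker x hxD)
  · rw [hG, Fin.range_cons, Submodule.span_insert, hvspan, hCeq]
  · rwa [hG0]
  · intro i
    rw [hG0, show G i.succ = v i from congrFun hGsucc i]
    have : hermInner q (v i) x = 0 := hDker _ (hvD i)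
    rw [hconj, this, zero_pow hq0]
  · rw [hGsucc, hvspan]
    exact hDlcd
  · rw [hGsucc, hvspan]
    exact hDdim
end

section
/- Let C be a Hermitian LCD [n,k,d] code over F_{q^2} with ℓ zero coordinates (ℓ < n). Then puncturing C on its zero coordinates yields a Hermitian LCD [n−ℓ, k, d] code whose Hermitian dual distance is at least 2. -/
open Finset Matrix

theorem wt_eq_zero_iff' {F : Type*} [Field F] {n : ℕ} (x : Fin n → F) : wt x = 0 ↔ x = 0 := by
  classical
  unfold wt
  rw [Nat.card_eq_fintype_card, Fintype.card_eq_zero_iff]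
  constructor
  · intro h; funext i
    by_contra hi
    exact h.elim' ⟨i, hi⟩
  · rintro rfl; exact ⟨fun ⟨i, hi⟩ => hi rfl⟩

/-- puncturing a Hermitian LCD `[n,k,d]` code on its `ℓ` zero coordinates
(`ℓ < n`) gives a Hermitian LCD `[n-ℓ,k,d]` code with Hermitian dual distance `≥ 2`.
The punctured code is the image of `C` under restriction along an embedding
`e : Fin (n - ℓ) ↪ Fin n` enumerating the nonzero coordinates. -/
theorem stmt_5 {F : Type*} [Field F] [Fintype F] (q n k d ℓ : ℕ) (hq : IsPrimePow q)
    (hcard : Fintype.card F = q ^ 2)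
    (C : Submodule F (Fin n → F)) (hdim : Module.finrank F C = k)
    (hlcd : IsHermLCD q C) (hd : minWt C d)
    (hl : Nat.card {i : Fin n // ∀ c ∈ C, c i = 0} = ℓ) (hln : ℓ < n)
    (e : Fin (n - ℓ) → Fin n) (he : Function.Injective e)
    (hrange : ∀ i : Fin n, (i ∈ Set.range e ↔ ∃ c ∈ C, c i ≠ 0)) :
    Module.finrank F (C.map (LinearMap.funLeft F F e)) = k ∧
    IsHermLCD q (C.map (LinearMap.funLeft F F e)) ∧
    minWt (C.map (LinearMap.funLeft F F e)) d ∧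
    dualDistGeTwo q (C.map (LinearMap.funLeft F F e)) := by
  set f : (Fin n → F) →ₗ[F] (Fin (n - ℓ) → F) := LinearMap.funLeft F F e with hf
  have hfapp : ∀ c : Fin n → F, f c = c ∘ e := fun c => rfl
  -- codewords vanish off the range of e
  have hzero : ∀ c ∈ C, ∀ i : Fin n, i ∉ Set.range e → c i = 0 := by
    intro c hc i hi
    by_contra h
    exact hi ((hrange i).mpr ⟨c, hc, h⟩)
  -- inner products are preserved
  have hinner : ∀ c ∈ C, ∀ y : Fin n → F,
      hermInner q (c ∘ e) (y ∘ e) = hermInner q c y := by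
    intro c hc y
    unfold hermInner
    calc ∑ i, (c ∘ e) i * (y ∘ e) i ^ q
        = ∑ i ∈ Finset.univ.map ⟨e, he⟩, c i * y i ^ q :=
          (Finset.sum_map Finset.univ ⟨e, he⟩ (fun i => c i * y i ^ q)).symm
      _ = ∑ i, c i * y i ^ q := by
          apply Finset.sum_subset (Finset.subset_univ _)
          intro i _ hi
          have hir : i ∉ Set.range e := by
            rintro ⟨j, rfl⟩
            exact hi (Finset.mem_map.mpr ⟨j, Finset.mem_univ j, rfl⟩)
          rw [hzero c hc i hir, zero_mul]
  -- weights are preserved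
  have hwt : ∀ c ∈ C, wt (c ∘ e) = wt c := by
    intro c hc
    unfold wt
    apply Nat.card_congr
    refine Equiv.ofBijective (fun j => ⟨e j.1, j.2⟩) ⟨?_, ?_⟩
    · rintro ⟨a, ha⟩ ⟨b, hb⟩ h
      exact Subtype.ext (he (congrArg Subtype.val h))
    · rintro ⟨i, hi⟩
      have hir : i ∈ Set.range e := by
        by_contra h
        exact hi (hzero c hc i h)
      obtain ⟨j, rfl⟩ := hir
      exact ⟨⟨j, hi⟩, rfl⟩
  -- restriction is injective on C
  have hinj : ∀ c ∈ C, c ∘ e = 0 → c = 0 := by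
    intro c hc h
    funext i
    by_cases hir : i ∈ Set.range e
    · obtain ⟨j, rfl⟩ := hir
      exact congrFun h j
    · exact hzero c hc i hir
  refine ⟨?_, ?_, ?_, ?_⟩
  · -- dimension
    have hmap : C.map f = LinearMap.range (f.comp C.subtype) := by
      rw [LinearMap.range_comp, Submodule.range_subtype]
    rw [hmap, ← hdim]
    apply LinearMap.finrank_range_of_inj
    apply LinearMap.ker_eq_bot.mp
    apply LinearMap.ker_eq_bot'.mpr
    intro x hx
    exact Subtype.ext (hinj x.1 x.2 hx)
  · -- LCD
    rw [IsHermLCD, eq_bot_iff]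
    rintro x ⟨hx1, hx2⟩
    obtain ⟨c, hc, rfl⟩ := hx1
    have hcd : c ∈ hermDual q C := by
      intro y hy
      have h0 : hermInner q (f c) (f y) = 0 :=
        hx2 (f y) (Submodule.mem_map.mpr ⟨y, hy, rfl⟩)
      rw [hfapp, hfapp, hinner c hc y] at h0
      exact h0
    have hc0 : c = 0 := by
      have : c ∈ C ⊓ hermDual q C := ⟨hc, hcd⟩
      rw [hlcd] at this
      simpa using this
    simp [hc0]
  · -- min weight
    obtain ⟨⟨c, hc, hc0, hcd⟩, hmin⟩ := hd
    constructor
    · refine ⟨f c, Submodule.mem_map.mpr ⟨c, hc, rfl⟩, ?_, ?_⟩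
      · intro h
        exact hc0 (hinj c hc h)
      · rw [hfapp, hwt c hc, hcd]
    · rintro x hx hx0
      obtain ⟨c', hc', rfl⟩ := hx
      have hc'0 : c' ≠ 0 := by
        rintro rfl
        exact hx0 (map_zero f)
      rw [hfapp, hwt c' hc']
      exact hmin c' hc' hc'0
  · -- dual distance ≥ 2
    classical
    intro x hx hx0
    by_contra h
    push_neg at h
    have hne0 : wt x ≠ 0 := fun h0 => hx0 ((wt_eq_zero_iff' x).mp h0)
    have h1 : wt x = 1 := Nat.le_antisymm (Nat.lt_succ_iff.mp h) (Nat.one_le_iff_ne_zero.mpr hne0)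
    have hcard1 : Fintype.card {i // x i ≠ 0} = 1 := by
      rw [← Nat.card_eq_fintype_card]; exact h1
    obtain ⟨⟨j, hj⟩, huniq⟩ := Fintype.card_eq_one_iff.mp hcard1
    have hxz : ∀ i, i ≠ j → x i = 0 := by
      intro i hi
      by_contra hxi
      exact hi (congrArg Subtype.val (huniq ⟨i, hxi⟩))
    have hcej : ∀ c ∈ C, c (e j) = 0 := by
      intro c hc
      have h0 : hermInner q x (f c) = 0 :=
        hx (f c) (Submodule.mem_map.mpr ⟨c, hc, rfl⟩)
      have hsum : hermInner q x (f c) = x j * c (e j) ^ q := by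
        unfold hermInner
        apply Finset.sum_eq_single_of_mem j (Finset.mem_univ j)
        intro b _ hb
        rw [hxz b hb, zero_mul]
      rw [hsum] at h0
      rcases mul_eq_zero.mp h0 with h | h
      · exact absurd h hj
      · exact pow_eq_zero_iff hq.pos.ne' |>.mp h
    obtain ⟨c, hc, hcj⟩ := (hrange (e j)).mp ⟨j, rfl⟩
    exact hcj (hcej c hc)
end

section
/- Let k ≥ 2 and d₀ a positive integer. If there exists no quaternary Hermitian LCD [n,k,d] code with d ≥ d₀ and Hermitian dual distance at least 2, then there exists no quaternary Hermitian LCD [n,k,d] code with d ≥ d₀ and Hermitian dual distance equal to 1. -/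
open Finset Matrix

namespace Stmt6Aux
open Finset

abbrev F4 := GaloisField 2 2
noncomputable instance : Fintype F4 := Fintype.ofFinite _

lemma cardF4 : Fintype.card F4 = 4 := by
  rw [← Nat.card_eq_fintype_card, GaloisField.card 2 2 (by norm_num)]; norm_num

lemma two_eq_zero : (2 : F4) = 0 := by
  have := CharP.cast_eq_zero F4 2
  push_cast at this; exact this

lemma cube (x : F4) (hx : x ≠ 0) : x^3 = 1 := by
  have := FiniteField.pow_card_sub_one_eq_one x hx
  rwa [cardF4] at this

lemma exists_omega : ∃ ω : F4, ω ≠ 0 ∧ ω ≠ 1 ∧ ω^2 + ω + 1 = 0 := by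
  have hlt : 2 < Fintype.card F4 := by rw [cardF4]; norm_num
  obtain ⟨a, b, c, hab, hac, hbc⟩ := Fintype.two_lt_card_iff.1 hlt
  have : ∃ ω : F4, ω ≠ 0 ∧ ω ≠ 1 := by
    by_contra hc
    push_neg at hc
    rcases eq_or_ne a 0 with ha | ha
    · refine hbc (Eq.trans (hc b ?_) (hc c ?_).symm)
      · rintro rfl; exact hab ha
      · rintro rfl; exact hac ha
    · rcases eq_or_ne b 0 with hb | hb
      · refine hac (Eq.trans (hc a ha) (hc c ?_).symm)
        rintro rfl; exact hbc hb
      · exact hab ((hc a ha).trans (hc b hb).symm)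
  obtain ⟨ω, h0, h1⟩ := this
  refine ⟨ω, h0, h1, ?_⟩
  have h3 := cube ω h0
  have hz : (ω - 1) * (ω^2 + ω + 1) = 0 := by linear_combination h3
  rcases mul_eq_zero.1 hz with h | h
  · exact absurd (by linear_combination h) h1
  · exact h

lemma three_term (ω a b a' b' : F4) (hω : ω^2 + ω + 1 = 0) :
    (a+b)*(a'+b')^2 + (a+ω*b)*(a'+ω*b')^2 + (a+ω^2*b)*(a'+ω^2*b')^2
      = a*a'^2 + b*b'^2 := by
  linear_combination (a*a'^2 + ω^3*b*b'^2) * two_eq_zero +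
    (2*a*a'*b' + (ω^2-ω+1)*a*b'^2 + a'^2*b + 2*(ω^2-ω+1)*a'*b*b' + ω^3*(ω-1)*b*b'^2) * hω

open scoped Classical in
lemma wt_eq_card {n : ℕ} (x : Fin n → F4) : wt x = (univ.filter fun i => x i ≠ 0).card := by
  rw [wt, Nat.card_eq_fintype_card]
  convert Fintype.card_subtype (fun i => x i ≠ 0)

lemma myfinrank_le_one {n : ℕ} (C : Submodule F4 (Fin n → F4)) (j₀ : Fin n)
    (hinj : ∀ c ∈ C, c j₀ = 0 → c = 0) : Module.finrank F4 C ≤ 1 := by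
  let φ : C →ₗ[F4] F4 := (LinearMap.proj j₀).comp C.subtype
  have hφ : Function.Injective φ := by
    intro u v huv
    have : ((u : Fin n → F4) - v) j₀ = 0 := by
      simp only [Pi.sub_apply, sub_eq_zero]
      exact huv
    have h2 := hinj _ (C.sub_mem u.2 v.2) this
    exact Subtype.ext (sub_eq_zero.mp h2)
  have := LinearMap.finrank_le_finrank_of_injective hφ
  simpa using this

lemma mem_hermDual {q n : ℕ} {C : Submodule F4 (Fin n → F4)} {x : Fin n → F4} :
    x ∈ hermDual q C ↔ ∀ y ∈ C, hermInner q x y = 0 := Iff.rfl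

lemma herm_eq {n : ℕ} (x y : Fin n → F4) : hermInner 2 x y = ∑ i, x i * (y i)^2 := rfl

/-- Master lemma: transport an LCD code along a weight-nondecreasing,
form-preserving map with no zero coordinate. -/
lemma build {n k d₀ d : ℕ} (C : Submodule F4 (Fin n → F4))
    (ψ : (Fin n → F4) →ₗ[F4] (Fin n → F4))
    (hrank : Module.finrank F4 C = k)
    (hlcd : IsHermLCD 2 C)
    (hmin : minWt C d) (hd : d₀ ≤ d)
    (hform : ∀ c ∈ C, ∀ c' ∈ C, hermInner 2 (ψ c) (ψ c') = hermInner 2 c c')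
    (hinj : ∀ c ∈ C, ψ c = 0 → c = 0)
    (hwt : ∀ c ∈ C, wt c ≤ wt (ψ c))
    (hcoord : ∀ m : Fin n, ∃ c ∈ C, ψ c m ≠ 0) :
    ∃ d' : ℕ, d₀ ≤ d' ∧ ∃ C' : Submodule F4 (Fin n → F4),
      Module.finrank F4 C' = k ∧ IsHermLCD 2 C' ∧ minWt C' d' ∧ dualDistGeTwo 2 C' := by
  classical
  set Cm := C.map ψ with hCm
  set e : C →ₗ[F4] (Fin n → F4) := ψ.comp C.subtype with he
  have einj : Function.Injective e := by
    intro u v huv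
    have hz : ψ ((u : Fin n → F4) - v) = 0 := by
      rw [map_sub]
      simp only [he, LinearMap.comp_apply, Submodule.coe_subtype] at huv
      rw [huv, sub_self]
    have h2 := hinj _ (C.sub_mem u.2 v.2) hz
    exact Subtype.ext (sub_eq_zero.mp h2)
  have hrange : LinearMap.range e = Cm := by
    rw [he, LinearMap.range_comp, Submodule.range_subtype]
  have hrank' : Module.finrank F4 Cm = k := by
    have h1 := (LinearEquiv.ofInjective e einj).finrank_eq
    rw [hrange] at h1
    rw [← h1, hrank]
  have hlcd' : IsHermLCD 2 Cm := by
    rw [IsHermLCD, Submodule.eq_bot_iff]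
    intro v hv
    obtain ⟨hv1, hv2⟩ := Submodule.mem_inf.mp hv
    obtain ⟨c, hc, rfl⟩ := hv1
    have hcd : c ∈ hermDual 2 C := by
      rw [mem_hermDual]
      intro y hy
      have h3 := hv2 (ψ y) (Submodule.mem_map_of_mem hy)
      rwa [hform c hc y hy] at h3
    have hmem : c ∈ C ⊓ hermDual 2 C := ⟨hc, hcd⟩
    rw [hlcd, Submodule.mem_bot] at hmem
    rw [hmem, map_zero]
  obtain ⟨c₀, hc₀, hc₀ne, hc₀wt⟩ := hmin.1
  have hψc₀ : ψ c₀ ≠ 0 := fun hz => hc₀ne (hinj c₀ hc₀ hz)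
  set W : Set ℕ := {w | ∃ v ∈ Cm, v ≠ 0 ∧ wt v = w} with hW
  have hWne : W.Nonempty := ⟨wt (ψ c₀), ψ c₀, Submodule.mem_map_of_mem hc₀, hψc₀, rfl⟩
  obtain ⟨v₀, hv₀m, hv₀ne, hv₀wt⟩ := Nat.sInf_mem hWne
  refine ⟨sInf W, ?_, Cm, hrank', hlcd', ⟨⟨v₀, hv₀m, hv₀ne, hv₀wt⟩, ?_⟩, ?_⟩
  · obtain ⟨c₁, hc₁, hv₀eq⟩ := hv₀m
    have hc₁ne : c₁ ≠ 0 := by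
      rintro rfl; rw [map_zero] at hv₀eq; exact hv₀ne hv₀eq.symm
    calc d₀ ≤ d := hd
      _ ≤ wt c₁ := hmin.2 c₁ hc₁ hc₁ne
      _ ≤ wt (ψ c₁) := hwt c₁ hc₁
      _ = wt v₀ := by rw [hv₀eq]
      _ = sInf W := hv₀wt
  · intro c hc hcne
    exact Nat.sInf_le ⟨c, hc, hcne, rfl⟩
  · intro x hx hxne
    by_contra hlt
    push_neg at hlt
    have hex : ∃ m₀, x m₀ ≠ 0 := by
      by_contra hz; push_neg at hz; exact hxne (funext fun m => hz m)
    obtain ⟨m₀, hm₀⟩ := hex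
    have hall : ∀ m, m ≠ m₀ → x m = 0 := by
      intro m hm
      by_contra hxm
      have h2 : 2 ≤ wt x := by
        rw [wt_eq_card]
        have hsub : ({m, m₀} : Finset (Fin n)) ⊆ univ.filter (fun i => x i ≠ 0) := by
          intro z hz
          simp only [Finset.mem_insert, Finset.mem_singleton] at hz
          rcases hz with rfl | rfl <;> simp [hxm, hm₀]
        calc 2 = ({m, m₀} : Finset (Fin n)).card := by
              rw [Finset.card_insert_of_notMem (by simpa using hm), Finset.card_singleton]
          _ ≤ _ := Finset.card_le_card hsub
      omega
    obtain ⟨c, hc, hcm₀⟩ := hcoord m₀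
    have h0 := hx (ψ c) (Submodule.mem_map_of_mem hc)
    rw [herm_eq, Finset.sum_eq_single m₀
      (fun b _ hb => by rw [hall b hb, zero_mul])
      (fun hmem => absurd (Finset.mem_univ m₀) hmem)] at h0
    rcases mul_eq_zero.1 h0 with h | h
    · exact hm₀ h
    · exact hcm₀ (pow_eq_zero_iff (by norm_num) |>.1 h)

end Stmt6Aux

open Stmt6Aux in
theorem stmt_6 (n k d₀ : ℕ) (hk : 2 ≤ k) (hd₀ : 1 ≤ d₀)
    (h : ¬ ∃ d : ℕ, d₀ ≤ d ∧
      ∃ C : Submodule (GaloisField 2 2) (Fin n → GaloisField 2 2),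
        Module.finrank (GaloisField 2 2) C = k ∧ IsHermLCD 2 C ∧ minWt C d ∧
        dualDistGeTwo 2 C) :
    ¬ ∃ d : ℕ, d₀ ≤ d ∧
      ∃ C : Submodule (GaloisField 2 2) (Fin n → GaloisField 2 2),
        Module.finrank (GaloisField 2 2) C = k ∧ IsHermLCD 2 C ∧ minWt C d ∧
        dualDistOne 2 C := by
  classical
  rintro ⟨d, hd, C, hrank, hlcd, hmin, x, hx, hxwt⟩
  apply h
  -- extract the unique support coordinate of x
  rw [Stmt6Aux.wt_eq_card] at hxwt
  obtain ⟨i, hi⟩ := Finset.card_eq_one.mp hxwt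
  have hxi : x i ≠ 0 := by
    have : i ∈ Finset.univ.filter (fun m => x m ≠ 0) := hi ▸ Finset.mem_singleton_self i
    exact (Finset.mem_filter.mp this).2
  have hxo : ∀ m, m ≠ i → x m = 0 := by
    intro m hm
    by_contra hz
    have : m ∈ Finset.univ.filter (fun m => x m ≠ 0) :=
      Finset.mem_filter.mpr ⟨Finset.mem_univ _, hz⟩
    rw [hi, Finset.mem_singleton] at this
    exact hm this
  -- coordinate i vanishes on C
  have hiz : ∀ y ∈ C, y i = 0 := by
    intro y hy
    have h0 := Stmt6Aux.mem_hermDual.mp hx y hy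
    rw [Stmt6Aux.herm_eq, Finset.sum_eq_single i
      (fun b _ hb => by rw [hxo b hb, zero_mul])
      (fun hmem => absurd (Finset.mem_univ i) hmem)] at h0
    rcases mul_eq_zero.1 h0 with h' | h'
    · exact absurd h' hxi
    · exact pow_eq_zero_iff (two_ne_zero) |>.1 h'
  set Sf : Finset (Fin n) := Finset.univ.filter (fun m => ∀ y ∈ C, y m = 0) with hSfdef
  have hiS : i ∈ Sf := Finset.mem_filter.mpr ⟨Finset.mem_univ _, hiz⟩
  have hzS : ∀ m ∈ Sf, ∀ y ∈ C, y m = 0 := fun m hm => (Finset.mem_filter.mp hm).2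
  have hnS : ∀ m, m ∉ Sf → ∃ c ∈ C, c m ≠ 0 := by
    intro m hm
    by_contra hz; push_neg at hz
    exact hm (Finset.mem_filter.mpr ⟨Finset.mem_univ m, hz⟩)
  -- a good pair of coordinates
  obtain ⟨j₁, j₂, hj₂ex, hindep⟩ :
      ∃ j₁ j₂ : Fin n, (∃ c ∈ C, c j₂ ≠ 0) ∧
        ∀ α : F4, ∃ c ∈ C, c j₁ + α * c j₂ ≠ 0 := by
    have hj₀ : ∃ j₀ : Fin n, ∃ c ∈ C, c j₀ ≠ 0 := by
      by_contra hz
      push_neg at hz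
      have hCbot : C = ⊥ := by
        rw [Submodule.eq_bot_iff]
        intro v hv
        exact funext fun m => hz m v hv
      rw [hCbot, finrank_bot] at hrank
      omega
    obtain ⟨j₀, hj₀⟩ := hj₀
    by_contra hcon
    push_neg at hcon
    have hkill : ∀ m : Fin n, ∃ α : F4, ∀ c ∈ C, c m + α * c j₀ = 0 := by
      intro m
      obtain ⟨α, hα⟩ := hcon m j₀ hj₀
      exact ⟨α, hα⟩
    choose α hα using hkill
    have hinj' : ∀ c ∈ C, c j₀ = 0 → c = 0 := by
      intro c hc hc0
      funext m
      have := hα m c hc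
      rw [hc0, mul_zero, add_zero] at this
      simpa using this
    have hle := Stmt6Aux.myfinrank_le_one C j₀ hinj'
    rw [show Module.finrank F4 ↥C = k from hrank] at hle
    omega
  have hj₁S : j₁ ∉ Sf := by
    obtain ⟨c, hc, hne⟩ := hindep 0
    rw [zero_mul, add_zero] at hne
    intro hS
    exact hne (hzS _ hS c hc)
  have hj₂S : j₂ ∉ Sf := by
    obtain ⟨c, hc, hne⟩ := hj₂ex
    intro hS
    exact hne (hzS _ hS c hc)
  have hj12 : j₁ ≠ j₂ := by
    intro hEq
    obtain ⟨c, hc, hne⟩ := hindep 1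
    apply hne
    rw [one_mul, hEq]
    linear_combination (c j₂) * Stmt6Aux.two_eq_zero
  rcases Nat.even_or_odd Sf.card with hpar | hpar
  -- ===================== EVEN case =====================
  · have hcard0 : ((Sf.card : ℕ) : F4) = 0 := by
      obtain ⟨t, ht⟩ := hpar
      rw [ht]; push_cast
      linear_combination (t : F4) * Stmt6Aux.two_eq_zero
    set ψ : (Fin n → F4) →ₗ[F4] (Fin n → F4) :=
      { toFun := fun v m => if m ∈ Sf then v j₂ else v m
        map_add' := by
          intro u v; funext m
          by_cases hm : m ∈ Sf <;> simp [hm]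
        map_smul' := by
          intro a v; funext m
          by_cases hm : m ∈ Sf <;> simp [hm] } with hψdef
    have hψa : ∀ (v : Fin n → F4) m, ψ v m = if m ∈ Sf then v j₂ else v m :=
      fun v m => rfl
    have hform : ∀ c ∈ C, ∀ c' ∈ C, hermInner 2 (ψ c) (ψ c') = hermInner 2 c c' := by
      intro c hc c' hc'
      rw [Stmt6Aux.herm_eq, Stmt6Aux.herm_eq,
        ← Finset.sum_sdiff (Finset.subset_univ Sf) (f := fun m => ψ c m * (ψ c' m)^2),
        ← Finset.sum_sdiff (Finset.subset_univ Sf) (f := fun m => c m * (c' m)^2)]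
      have e1 : ∑ m ∈ Finset.univ \ Sf, ψ c m * (ψ c' m)^2
          = ∑ m ∈ Finset.univ \ Sf, c m * (c' m)^2 :=
        Finset.sum_congr rfl fun m hm => by
          have hm' : m ∉ Sf := (Finset.mem_sdiff.mp hm).2
          rw [hψa, hψa, if_neg hm', if_neg hm']
      have e2 : ∑ m ∈ Sf, ψ c m * (ψ c' m)^2 = 0 := by
        have hcongr : ∀ m ∈ Sf, ψ c m * (ψ c' m)^2 = c j₂ * (c' j₂)^2 := fun m hm => by
          rw [hψa, hψa, if_pos hm, if_pos hm]
        rw [Finset.sum_congr rfl hcongr, Finset.sum_const, nsmul_eq_mul, hcard0, zero_mul]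
      have e3 : ∑ m ∈ Sf, c m * (c' m)^2 = 0 :=
        Finset.sum_eq_zero fun m hm => by rw [hzS m hm c hc, zero_mul]
      rw [e1, e2, e3]
    have hinj : ∀ c ∈ C, ψ c = 0 → c = 0 := by
      intro c hc hz
      funext m
      show c m = 0
      by_cases hm : m ∈ Sf
      · exact hzS m hm c hc
      · have h0 := congrFun hz m
        rw [hψa, if_neg hm] at h0
        simpa using h0
    have hwt : ∀ c ∈ C, wt c ≤ wt (ψ c) := by
      intro c hc
      rw [Stmt6Aux.wt_eq_card, Stmt6Aux.wt_eq_card]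
      apply Finset.card_le_card
      intro m hm
      rw [Finset.mem_filter] at hm ⊢
      refine ⟨Finset.mem_univ m, ?_⟩
      have hmS : m ∉ Sf := fun hS => hm.2 (hzS m hS c hc)
      rw [hψa, if_neg hmS]
      exact hm.2
    have hcoord : ∀ m : Fin n, ∃ c ∈ C, ψ c m ≠ 0 := by
      intro m
      by_cases hm : m ∈ Sf
      · obtain ⟨c, hc, hne⟩ := hj₂ex
        refine ⟨c, hc, ?_⟩
        rw [hψa, if_pos hm]
        exact hne
      · obtain ⟨c, hc, hne⟩ := hnS m hm
        refine ⟨c, hc, ?_⟩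
        rw [hψa, if_neg hm]
        exact hne
    exact Stmt6Aux.build C ψ hrank hlcd hmin hd hform hinj hwt hcoord
  -- ===================== ODD case =====================
  · obtain ⟨ω, hω0, hω1, hω⟩ := Stmt6Aux.exists_omega
    have hcard1 : ((Sf.card : ℕ) : F4) = 1 := by
      obtain ⟨t, ht⟩ := hpar
      rw [ht]; push_cast
      linear_combination (t : F4) * Stmt6Aux.two_eq_zero
    set ψ : (Fin n → F4) →ₗ[F4] (Fin n → F4) :=
      { toFun := fun v m =>
          if m ∈ Sf then v j₁ + v j₂
          else if m = j₁ then v j₁ + ω * v j₂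
          else if m = j₂ then v j₁ + ω^2 * v j₂
          else v m
        map_add' := by
          intro u v; funext m
          by_cases hm : m ∈ Sf
          · simp [hm]; ring
          · by_cases hm1 : m = j₁
            · subst hm1; simp [hm]; ring
            · by_cases hm2 : m = j₂
              · subst hm2; simp [hm, Ne.symm hj12]; ring
              · simp [hm, hm1, hm2]
        map_smul' := by
          intro a v; funext m
          by_cases hm : m ∈ Sf
          · simp [hm]; ring
          · by_cases hm1 : m = j₁
            · subst hm1; simp [hm]; ring
            · by_cases hm2 : m = j₂
              · subst hm2; simp [hm, Ne.symm hj12]; ring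
              · simp [hm, hm1, hm2] } with hψdef
    have hψa : ∀ (v : Fin n → F4) m, ψ v m =
        if m ∈ Sf then v j₁ + v j₂
        else if m = j₁ then v j₁ + ω * v j₂
        else if m = j₂ then v j₁ + ω^2 * v j₂
        else v m := fun v m => rfl
    have hA : ∀ v : Fin n → F4, ψ v j₁ = v j₁ + ω * v j₂ := fun v => by
      rw [hψa, if_neg hj₁S, if_pos rfl]
    have hB : ∀ v : Fin n → F4, ψ v j₂ = v j₁ + ω^2 * v j₂ := fun v => by
      rw [hψa, if_neg hj₂S, if_neg (Ne.symm hj12), if_pos rfl]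
    have hSv : ∀ (v : Fin n → F4) m, m ∈ Sf → ψ v m = v j₁ + v j₂ := fun v m hm => by
      rw [hψa, if_pos hm]
    have hRv : ∀ (v : Fin n → F4) m, m ∉ Sf → m ≠ j₁ → m ≠ j₂ → ψ v m = v m :=
      fun v m hm hm1 hm2 => by rw [hψa, if_neg hm, if_neg hm1, if_neg hm2]
    -- distinctness of multipliers
    have h1ω : (1 : F4) ≠ ω := fun hEq => hω1 hEq.symm
    have hωω2 : ω ≠ ω^2 := by
      intro hEq
      have hz : ω * (ω - 1) = 0 := by linear_combination -hEq
      rcases mul_eq_zero.1 hz with h' | h'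
      · exact hω0 h'
      · exact hω1 (by linear_combination h')
    have h1ω2 : (1 : F4) ≠ ω^2 := by
      intro hEq
      have hz : (ω - 1) * (ω + 1) = 0 := by linear_combination -hEq
      rcases mul_eq_zero.1 hz with h' | h'
      · exact hω1 (by linear_combination h')
      · exact hω1 (by linear_combination h' - Stmt6Aux.two_eq_zero)
    have hform : ∀ c ∈ C, ∀ c' ∈ C, hermInner 2 (ψ c) (ψ c') = hermInner 2 c c' := by
      intro c hc c' hc'
      have hj₁' : j₁ ∈ Finset.univ \ Sf :=
        Finset.mem_sdiff.mpr ⟨Finset.mem_univ _, hj₁S⟩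
      have hj₂' : j₂ ∈ (Finset.univ \ Sf).erase j₁ :=
        Finset.mem_erase.mpr ⟨Ne.symm hj12, Finset.mem_sdiff.mpr ⟨Finset.mem_univ _, hj₂S⟩⟩
      have decomp : ∀ v v' : Fin n → F4, hermInner 2 v v' =
          (v j₁ * (v' j₁)^2 + (v j₂ * (v' j₂)^2 +
            ∑ m ∈ ((Finset.univ \ Sf).erase j₁).erase j₂, v m * (v' m)^2))
          + ∑ m ∈ Sf, v m * (v' m)^2 := by
        intro v v'
        rw [Stmt6Aux.herm_eq,
          ← Finset.sum_sdiff (Finset.subset_univ Sf) (f := fun m => v m * (v' m)^2),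
          ← Finset.add_sum_erase _ _ hj₁', ← Finset.add_sum_erase _ _ hj₂']
      rw [decomp, decomp]
      have hSsum : ∑ m ∈ Sf, ψ c m * (ψ c' m)^2 = (c j₁ + c j₂) * (c' j₁ + c' j₂)^2 := by
        have hcongr : ∀ m ∈ Sf, ψ c m * (ψ c' m)^2 = (c j₁ + c j₂) * (c' j₁ + c' j₂)^2 :=
          fun m hm => by rw [hSv c m hm, hSv c' m hm]
        rw [Finset.sum_congr rfl hcongr, Finset.sum_const, nsmul_eq_mul, hcard1, one_mul]
      have hSsum' : ∑ m ∈ Sf, c m * (c' m)^2 = 0 :=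
        Finset.sum_eq_zero fun m hm => by rw [hzS m hm c hc, zero_mul]
      have hrest : ∑ m ∈ ((Finset.univ \ Sf).erase j₁).erase j₂, ψ c m * (ψ c' m)^2
          = ∑ m ∈ ((Finset.univ \ Sf).erase j₁).erase j₂, c m * (c' m)^2 :=
        Finset.sum_congr rfl fun m hm => by
          have h2 := Finset.mem_erase.mp hm
          have h3 := Finset.mem_erase.mp h2.2
          have h4 : m ∉ Sf := (Finset.mem_sdiff.mp h3.2).2
          rw [hRv c m h4 h3.1 h2.1, hRv c' m h4 h3.1 h2.1]
      rw [hA c, hA c', hB c, hB c', hSsum, hSsum', hrest]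
      linear_combination Stmt6Aux.three_term ω (c j₁) (c j₂) (c' j₁) (c' j₂) hω
    have hinj : ∀ c ∈ C, ψ c = 0 → c = 0 := by
      intro c hc hz
      have h1 := congrFun hz j₁
      have h2 := congrFun hz j₂
      rw [hA c] at h1
      rw [hB c] at h2
      simp only [Pi.zero_apply] at h1 h2
      have hb : c j₂ = 0 := by
        linear_combination h1 - h2 + (c j₂) * hω - (ω * c j₂) * Stmt6Aux.two_eq_zero
      have ha : c j₁ = 0 := by rw [hb, mul_zero, add_zero] at h1; exact h1
      funext m
      show c m = 0
      by_cases hm : m ∈ Sf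
      · exact hzS m hm c hc
      · by_cases hm1 : m = j₁
        · rw [hm1]; exact ha
        · by_cases hm2 : m = j₂
          · rw [hm2]; exact hb
          · have h0 := congrFun hz m
            rw [hRv c m hm hm1 hm2] at h0
            simpa using h0
    have hwt : ∀ c ∈ C, wt c ≤ wt (ψ c) := by
      intro c hc
      rw [Stmt6Aux.wt_eq_card, Stmt6Aux.wt_eq_card]
      by_cases hab : c j₁ = 0 ∧ c j₂ = 0
      · apply Finset.card_le_card
        intro m hm
        rw [Finset.mem_filter] at hm ⊢
        refine ⟨Finset.mem_univ m, ?_⟩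
        have hmS : m ∉ Sf := fun hS => hm.2 (hzS m hS c hc)
        have hm1 : m ≠ j₁ := by rintro rfl; exact hm.2 hab.1
        have hm2 : m ≠ j₂ := by rintro rfl; exact hm.2 hab.2
        rw [hRv c m hmS hm1 hm2]
        exact hm.2
      · have pairkill : ∀ u u' : F4, u ≠ u' →
            c j₁ + u * c j₂ = 0 → c j₁ + u' * c j₂ = 0 → False := by
          intro u u' huu h1 h2
          have hb : c j₂ = 0 := by
            have h3 : (u - u') * c j₂ = 0 := by linear_combination h1 - h2
            rcases mul_eq_zero.1 h3 with h' | h'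
            · exact absurd (sub_eq_zero.mp h') huu
            · exact h'
          have ha : c j₁ = 0 := by rw [hb, mul_zero, add_zero] at h1; exact h1
          exact hab ⟨ha, hb⟩
        obtain ⟨e₁, e₂, hne12, hv₁, hv₂, hm₁, hm₂⟩ :
            ∃ e₁ e₂ : Fin n, e₁ ≠ e₂ ∧ ψ c e₁ ≠ 0 ∧ ψ c e₂ ≠ 0 ∧
              (e₁ ∈ Sf ∨ e₁ = j₁ ∨ e₁ = j₂) ∧ (e₂ ∈ Sf ∨ e₂ = j₁ ∨ e₂ = j₂) := by
          by_cases h1 : c j₁ + ω * c j₂ = 0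
          · refine ⟨i, j₂, ?_, ?_, ?_, Or.inl hiS, Or.inr (Or.inr rfl)⟩
            · intro hEq; exact hj₂S (hEq ▸ hiS)
            · rw [hSv c i hiS]
              intro h0
              exact pairkill 1 ω h1ω (by rw [one_mul]; exact h0) h1
            · rw [hB c]
              intro h0
              exact pairkill ω (ω^2) hωω2 h1 h0
          · by_cases h2 : c j₁ + ω^2 * c j₂ = 0
            · refine ⟨j₁, i, ?_, ?_, ?_, Or.inr (Or.inl rfl), Or.inl hiS⟩
              · intro hEq; exact hj₁S (hEq ▸ hiS)
              · rw [hA c]; exact h1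
              · rw [hSv c i hiS]
                intro h0
                exact pairkill 1 (ω^2) h1ω2 (by rw [one_mul]; exact h0) h2
            · exact ⟨j₁, j₂, hj12, by rw [hA c]; exact h1, by rw [hB c]; exact h2,
                Or.inr (Or.inl rfl), Or.inr (Or.inr rfl)⟩
        have hsubset : ((Finset.univ.filter (fun m => c m ≠ 0)) \ {j₁, j₂}) ∪ {e₁, e₂}
            ⊆ Finset.univ.filter (fun m => ψ c m ≠ 0) := by
          intro z hz
          rw [Finset.mem_union] at hz
          rcases hz with hz | hz
          · rw [Finset.mem_sdiff] at hz
            obtain ⟨hzT, hzp⟩ := hz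
            have hzc : c z ≠ 0 := (Finset.mem_filter.mp hzT).2
            have hz1 : z ≠ j₁ := by
              intro hEq; exact hzp (by rw [hEq]; exact Finset.mem_insert_self _ _)
            have hz2 : z ≠ j₂ := by
              intro hEq
              exact hzp (by rw [hEq]; exact Finset.mem_insert_of_mem (Finset.mem_singleton_self _))
            have hzS' : z ∉ Sf := fun hS => hzc (hzS z hS c hc)
            refine Finset.mem_filter.mpr ⟨Finset.mem_univ _, ?_⟩
            rw [hRv c z hzS' hz1 hz2]
            exact hzc
          · rw [Finset.mem_insert, Finset.mem_singleton] at hz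
            rcases hz with rfl | rfl
            · exact Finset.mem_filter.mpr ⟨Finset.mem_univ _, hv₁⟩
            · exact Finset.mem_filter.mpr ⟨Finset.mem_univ _, hv₂⟩
        have hdisj : Disjoint ((Finset.univ.filter (fun m => c m ≠ 0)) \ {j₁, j₂})
            ({e₁, e₂} : Finset (Fin n)) := by
          rw [Finset.disjoint_left]
          intro z hz hz2
          rw [Finset.mem_sdiff] at hz
          rw [Finset.mem_insert, Finset.mem_singleton] at hz2
          have hzc : c z ≠ 0 := (Finset.mem_filter.mp hz.1).2
          have hzmem : z ∈ Sf ∨ z = j₁ ∨ z = j₂ := by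
            rcases hz2 with rfl | rfl
            exacts [hm₁, hm₂]
          rcases hzmem with hS | hEq | hEq
          · exact hzc (hzS z hS c hc)
          · exact hz.2 (by rw [hEq]; exact Finset.mem_insert_self _ _)
          · exact hz.2 (by rw [hEq]; exact Finset.mem_insert_of_mem (Finset.mem_singleton_self _))
        calc (Finset.univ.filter (fun m => c m ≠ 0)).card
            ≤ ((Finset.univ.filter (fun m => c m ≠ 0)) \ ({j₁, j₂} : Finset (Fin n))).card
              + ({j₁, j₂} : Finset (Fin n)).card :=
              Finset.card_le_card_sdiff_add_card
          _ = ((Finset.univ.filter (fun m => c m ≠ 0)) \ {j₁, j₂}).card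
              + ({e₁, e₂} : Finset (Fin n)).card := by
              rw [Finset.card_pair hj12, Finset.card_pair hne12]
          _ = (((Finset.univ.filter (fun m => c m ≠ 0)) \ {j₁, j₂}) ∪ {e₁, e₂}).card :=
              (Finset.card_union_of_disjoint hdisj).symm
          _ ≤ (Finset.univ.filter (fun m => ψ c m ≠ 0)).card :=
              Finset.card_le_card hsubset
    have hcoord : ∀ m : Fin n, ∃ c ∈ C, ψ c m ≠ 0 := by
      intro m
      by_cases hm : m ∈ Sf
      · obtain ⟨c, hc, hne⟩ := hindep 1
        refine ⟨c, hc, ?_⟩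
        rw [hSv c m hm]
        intro h0
        exact hne (by rw [one_mul]; exact h0)
      · by_cases hm1 : m = j₁
        · obtain ⟨c, hc, hne⟩ := hindep ω
          subst hm1
          exact ⟨c, hc, by rw [hA c]; exact hne⟩
        · by_cases hm2 : m = j₂
          · obtain ⟨c, hc, hne⟩ := hindep (ω^2)
            subst hm2
            exact ⟨c, hc, by rw [hB c]; exact hne⟩
          · obtain ⟨c, hc, hne⟩ := hnS m hm
            refine ⟨c, hc, ?_⟩
            rw [hRv c m hm hm1 hm2]
            exact hne
    exact Stmt6Aux.build C ψ hrank hlcd hmin hd hform hinj hwt hcoord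
end

section
/- Let k ≥ 3, and suppose a quaternary code C has a generator matrix with rows x, x', g₃, ..., g_k over F_4 such that (x,x)_h ≠ 0, (x',x')_h ≠ 0, (x,x')_h = 0, x and x' are Hermitian-orthogonal to all of g₃,...,g_k, and the code C₂ generated by g₃,...,g_k is Hermitian LCD of dimension k−2. Let G be the matrix obtained by appending the column (1,1,0,...,0)^T. Then det(G·conj(G)^T) = det(G₂·conj(G₂)^T) ≠ 0, where G₂ is the matrix with rows g₃,...,g_k; hence the code generated by G is Hermitian LCD of length n+1. -/
open Finset Matrix

noncomputable local instance : Fintype (GaloisField 2 2) := Fintype.ofFinite _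

lemma pow4 (a : GaloisField 2 2) : a ^ 4 = a := by
  have h : Fintype.card (GaloisField 2 2) = 4 := by
    rw [← Nat.card_eq_fintype_card, GaloisField.card 2 2 (by norm_num)]; norm_num
  calc a ^ 4 = a ^ Fintype.card (GaloisField 2 2) := by rw [h]
  _ = a := FiniteField.pow_card a

lemma sq_sum {ι : Type*} (s : Finset ι) (f : ι → GaloisField 2 2) :
    (∑ i ∈ s, f i) ^ 2 = ∑ i ∈ s, (f i) ^ 2 := by
  exact_mod_cast sum_pow_char 2 s f

lemma herm_self_eq_one {n : ℕ} (x : Fin n → GaloisField 2 2) (hx : hermInner 2 x x ≠ 0) :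
    hermInner 2 x x = 1 := by
  have hs : hermInner 2 x x ^ 2 = hermInner 2 x x := by
    rw [hermInner, sq_sum]
    refine Finset.sum_congr rfl fun i _ => ?_
    have h1 : (x i * x i ^ 2) ^ 2 = x i ^ 2 * x i ^ 4 := by ring
    rw [h1, pow4]; ring
  have h2 : hermInner 2 x x * (hermInner 2 x x - 1) = 0 := by
    linear_combination hs
  rcases mul_eq_zero.mp h2 with h | h
  · exact absurd h hx
  · linear_combination h

lemma gram_apply {k N : ℕ} (A : Matrix (Fin k) (Fin N) (GaloisField 2 2)) (i j : Fin k) :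
    (A * (A.map (· ^ 2))ᵀ) i j = hermInner 2 (A i) (A j) := by
  simp [Matrix.mul_apply, hermInner, Matrix.map_apply, Matrix.transpose_apply]

lemma herm_vecMul {k N : ℕ} (A : Matrix (Fin k) (Fin N) (GaloisField 2 2))
    (c : Fin k → GaloisField 2 2) (j : Fin k) :
    hermInner 2 (Matrix.vecMul c A) (A j) = Matrix.vecMul c (A * (A.map (· ^ 2))ᵀ) j := by
  simp only [hermInner, Matrix.vecMul, dotProduct, Matrix.mul_apply,
    Matrix.map_apply, Matrix.transpose_apply, Finset.sum_mul, Finset.mul_sum]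
  rw [Finset.sum_comm]
  exact Finset.sum_congr rfl fun l _ => Finset.sum_congr rfl fun i _ => by ring

lemma vecMul_eq_sum_smul {k N : ℕ} (A : Matrix (Fin k) (Fin N) (GaloisField 2 2))
    (c : Fin k → GaloisField 2 2) :
    Matrix.vecMul c A = ∑ i, c i • A i := by
  ext j
  simp [Matrix.vecMul, dotProduct, Finset.sum_apply]

lemma lcd_of_det {k N : ℕ} (A : Matrix (Fin k) (Fin N) (GaloisField 2 2))
    (hdet : (A * (A.map (· ^ 2))ᵀ).det ≠ 0) :
    IsHermLCD 2 (Submodule.span (GaloisField 2 2) (Set.range A)) := by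
  set M := A * (A.map (· ^ 2))ᵀ with hM
  rw [IsHermLCD, Submodule.eq_bot_iff]
  rintro v hv
  obtain ⟨hvC, hvD⟩ := Submodule.mem_inf.mp hv
  obtain ⟨c, hc⟩ := (Submodule.mem_span_range_iff_exists_fun _).mp hvC
  have hvc : v = Matrix.vecMul c A := by rw [vecMul_eq_sum_smul, hc]
  have hzero : Matrix.vecMul c M = 0 := by
    funext j
    have hAj : A j ∈ Submodule.span (GaloisField 2 2) (Set.range A) :=
      Submodule.subset_span ⟨j, rfl⟩
    have := hvD (A j) hAj
    rw [hvc, herm_vecMul] at this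
    simpa using this
  have hcz : c = 0 := by
    have hinv : IsUnit M.det := isUnit_iff_ne_zero.mpr hdet
    have h1 : Matrix.vecMul (Matrix.vecMul c M) M⁻¹ = Matrix.vecMul c (M * M⁻¹) :=
      Matrix.vecMul_vecMul c M M⁻¹
    rw [hzero, Matrix.mul_nonsing_inv M hinv] at h1
    simpa using h1.symm
  rw [hvc, hcz]
  simp

lemma det_ne_of_lcd {k N : ℕ} (A : Matrix (Fin k) (Fin N) (GaloisField 2 2))
    (hli : LinearIndependent (GaloisField 2 2) A)
    (hlcd : IsHermLCD 2 (Submodule.span (GaloisField 2 2) (Set.range A))) :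
    (A * (A.map (· ^ 2))ᵀ).det ≠ 0 := by
  set M := A * (A.map (· ^ 2))ᵀ with hM
  intro hdet
  obtain ⟨c, hc0, hcM⟩ := Matrix.exists_vecMul_eq_zero_iff.mpr hdet
  set v := Matrix.vecMul c A with hv
  have hvC : v ∈ Submodule.span (GaloisField 2 2) (Set.range A) := by
    rw [hv, vecMul_eq_sum_smul]
    exact Submodule.sum_mem _ fun i _ => Submodule.smul_mem _ _ (Submodule.subset_span ⟨i, rfl⟩)
  have hvD : v ∈ hermDual 2 (Submodule.span (GaloisField 2 2) (Set.range A)) := by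
    intro y hy
    obtain ⟨d, hd⟩ := (Submodule.mem_span_range_iff_exists_fun _).mp hy
    have hyd : ∀ i, y i = ∑ j, d j * A j i := by
      intro i; rw [← hd]; simp [Finset.sum_apply]
    have hherm : ∀ j, hermInner 2 v (A j) = 0 := by
      intro j; rw [hv, herm_vecMul, hcM]; rfl
    calc hermInner 2 v y = ∑ i, v i * (∑ j, d j * A j i) ^ 2 := by
          simp only [hermInner]; exact Finset.sum_congr rfl fun i _ => by rw [hyd]
    _ = ∑ i, ∑ j, d j ^ 2 * (v i * A j i ^ 2) := by
          refine Finset.sum_congr rfl fun i _ => ?_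
          rw [sq_sum, Finset.mul_sum]
          exact Finset.sum_congr rfl fun j _ => by ring
    _ = ∑ j, d j ^ 2 * hermInner 2 v (A j) := by
          rw [Finset.sum_comm]
          exact Finset.sum_congr rfl fun j _ => by rw [hermInner, Finset.mul_sum]
    _ = 0 := by simp [hherm]
  have hv0 : v = 0 := by
    have := hlcd
    rw [IsHermLCD, Submodule.eq_bot_iff] at this
    exact this v (Submodule.mem_inf.mpr ⟨hvC, hvD⟩)
  apply hc0
  funext i
  have := Fintype.linearIndependent_iff.mp hli c (by rw [← vecMul_eq_sum_smul, ← hv, hv0]) i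
  exact this
/-- the dimension `k ≥ 3` is written as `k = m + 3` with the matrix `G₂`
consisting of the `m + 1 = k - 2` rows `g₃, …, g_k`.  The full generator matrix has
rows `x, x', g₃, …, g_k`, and `G` is obtained by appending the column
`(1,1,0,…,0)ᵀ`. -/
theorem stmt_9 (n m : ℕ) (x x' : Fin n → GaloisField 2 2)
    (G₂ : Matrix (Fin (m + 1)) (Fin n) (GaloisField 2 2))
    (hx : hermInner 2 x x ≠ 0) (hx' : hermInner 2 x' x' ≠ 0)
    (hxx' : hermInner 2 x x' = 0) (hx'x : hermInner 2 x' x = 0)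
    (hxg : ∀ i, hermInner 2 x (G₂ i) = 0) (hgx : ∀ i, hermInner 2 (G₂ i) x = 0)
    (hx'g : ∀ i, hermInner 2 x' (G₂ i) = 0) (hgx' : ∀ i, hermInner 2 (G₂ i) x' = 0)
    (hli : LinearIndependent (GaloisField 2 2)
      (Fin.cases x (Fin.cases x' G₂) : Fin (m + 3) → Fin n → GaloisField 2 2))
    (hlcd2 : IsHermLCD 2 (Submodule.span (GaloisField 2 2) (Set.range G₂)))
    (hdim2 : Module.finrank (GaloisField 2 2)
      (Submodule.span (GaloisField 2 2) (Set.range G₂)) = m + 1)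
    (G : Matrix (Fin (m + 3)) (Fin (n + 1)) (GaloisField 2 2))
    (hG : ∀ i j, G i j = Fin.lastCases
      (if (i : ℕ) < 2 then (1 : GaloisField 2 2) else 0)
      (fun j' => (Fin.cases x (Fin.cases x' G₂) : Fin (m + 3) → Fin n → GaloisField 2 2) i j')
      j) :
    (G * (G.map (· ^ 2))ᵀ).det = (G₂ * (G₂.map (· ^ 2))ᵀ).det ∧
    (G * (G.map (· ^ 2))ᵀ).det ≠ 0 ∧
    IsHermLCD 2 (Submodule.span (GaloisField 2 2) (Set.range G)) := by
  
  classical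
  set rows : Fin (m + 3) → Fin n → GaloisField 2 2 :=
    (Fin.cases x (Fin.cases x' G₂) : Fin (m + 3) → Fin n → GaloisField 2 2) with hrows
  set M := G * (G.map (· ^ 2))ᵀ with hMdef
  set M₂ := G₂ * (G₂.map (· ^ 2))ᵀ with hM2def
  -- entry formula
  have hMentry : ∀ i j, M i j = hermInner 2 (rows i) (rows j) +
      (if (i : ℕ) < 2 then (1:GaloisField 2 2) else 0) *
      (if (j : ℕ) < 2 then (1:GaloisField 2 2) else 0) := by
    intro i j
    have h0 : M i j = ∑ l : Fin (n+1), G i l * (G j l) ^ 2 := by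
      simp [hMdef, Matrix.mul_apply, Matrix.map_apply, Matrix.transpose_apply]
    rw [h0, Fin.sum_univ_castSucc]
    congr 1
    · simp only [hG, Fin.lastCases_castSucc, hermInner]
    · simp only [hG, Fin.lastCases_last]
      split_ifs <;> norm_num
  -- rows at special indices
  have hrow0 : rows 0 = x := Fin.cases_zero ..
  have hrow1 : rows (Fin.succ 0) = x' := by
    simp only [hrows]; rw [Fin.cases_succ]; exact Fin.cases_zero ..
  have hrow2 : ∀ i : Fin (m+1), rows (Fin.succ (Fin.succ i)) = G₂ i := by
    intro i; simp only [hrows]; rw [Fin.cases_succ]; exact Fin.cases_succ ..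
  have hrowv0 : ∀ i : Fin (m+3), (i : ℕ) = 0 → rows i = x := by
    intro i hi
    have : i = 0 := Fin.ext (by simpa using hi)
    rw [this, hrow0]
  have hrowv1 : ∀ i : Fin (m+3), (i : ℕ) = 1 → rows i = x' := by
    intro i hi
    have : i = Fin.succ 0 := Fin.ext (by simpa using hi)
    rw [this, hrow1]
  have hrowv2 : ∀ (i : Fin (m+3)) (b : Fin (m+1)), (i : ℕ) = (b : ℕ) + 2 → rows i = G₂ b := by
    intro i b hi
    have : i = Fin.succ (Fin.succ b) := Fin.ext (by simp [hi])
    rw [this, hrow2]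
  -- the equivalence
  have he : (2 : ℕ) + (m + 1) = m + 3 := by omega
  set e : Fin 2 ⊕ Fin (m+1) ≃ Fin (m+3) := finSumFinEquiv.trans (finCongr he) with hedef
  have heinl : ∀ a : Fin 2, ((e (Sum.inl a) : Fin (m+3)) : ℕ) = (a : ℕ) := by
    intro a; simp [hedef]
  have heinr : ∀ b : Fin (m+1), ((e (Sum.inr b) : Fin (m+3)) : ℕ) = (b : ℕ) + 2 := by
    intro b; simp [hedef]
  -- Hermitian self products are 1
  have hx1 : hermInner 2 x x = 1 := herm_self_eq_one x hx
  have hx'1 : hermInner 2 x' x' = 1 := herm_self_eq_one x' hx'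
  -- block form
  have hblock : M.submatrix e e =
      Matrix.fromBlocks !![(0:GaloisField 2 2),1;1,0] 0 0 M₂ := by
    ext p q
    rcases p with a | b <;> rcases q with a' | b'
    · fin_cases a <;> fin_cases a' <;>
        simp only [Matrix.submatrix_apply, hMentry, Matrix.fromBlocks_apply₁₁]
      · rw [hrowv0 _ (by simp [heinl])]
        simp [heinl, hx1, CharTwo.add_self_eq_zero]
      · rw [hrowv0 _ (by simp [heinl]), hrowv1 _ (by simp [heinl])]
        simp [heinl, hxx']
      · rw [hrowv1 _ (by simp [heinl]), hrowv0 _ (by simp [heinl])]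
        simp [heinl, hx'x]
      · rw [hrowv1 _ (by simp [heinl])]
        simp [heinl, hx'1, CharTwo.add_self_eq_zero]
    · fin_cases a <;>
        simp only [Matrix.submatrix_apply, hMentry, Matrix.fromBlocks_apply₁₂]
      · rw [hrowv0 _ (by simp [heinl]), hrowv2 _ b' (heinr b')]
        simp [heinr, hxg]
      · rw [hrowv1 _ (by simp [heinl]), hrowv2 _ b' (heinr b')]
        simp [heinr, hx'g]
    · fin_cases a' <;>
        simp only [Matrix.submatrix_apply, hMentry, Matrix.fromBlocks_apply₂₁]
      · rw [hrowv2 _ b (heinr b), hrowv0 _ (by simp [heinl])]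
        simp [heinr, hgx]
      · rw [hrowv2 _ b (heinr b), hrowv1 _ (by simp [heinl])]
        simp [heinr, hgx']
    · simp only [Matrix.submatrix_apply, hMentry, Matrix.fromBlocks_apply₂₂]
      rw [hrowv2 _ b (heinr b), hrowv2 _ b' (heinr b')]
      have : M₂ b b' = hermInner 2 (G₂ b) (G₂ b') := by
        rw [hM2def]; exact gram_apply G₂ b b'
      rw [this]
      simp [heinr]
  -- determinant equality
  have hdeteq : M.det = M₂.det := by
    have h1 : (M.submatrix e e).det = M.det := Matrix.det_submatrix_equiv_self e M
    rw [← h1, hblock, Matrix.det_fromBlocks_zero₂₁]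
    have hA : (!![(0:GaloisField 2 2),1;1,0]).det = -1 := by
      simp [Matrix.det_fin_two]
    rw [hA, CharTwo.neg_eq, one_mul]
  -- linear independence of G₂
  have hliG2 : LinearIndependent (GaloisField 2 2) G₂ := by
    have hinj : Function.Injective (fun i : Fin (m+1) => Fin.succ (Fin.succ i)) :=
      fun a b hab => Fin.succ_injective _ (Fin.succ_injective _ hab)
    have h2 := hli.comp (fun i : Fin (m+1) => Fin.succ (Fin.succ i)) hinj
    have hcomp : ((Fin.cases x (Fin.cases x' G₂) : Fin (m + 3) → Fin n → GaloisField 2 2) ∘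
        fun i : Fin (m+1) => Fin.succ (Fin.succ i)) = G₂ := funext fun i => hrow2 i
    rwa [hcomp] at h2
  have hdet2 : M₂.det ≠ 0 := det_ne_of_lcd G₂ hliG2 hlcd2
  have hdetM : M.det ≠ 0 := by rw [hdeteq]; exact hdet2
  exact ⟨hdeteq, hdetM, lcd_of_det G hdetM⟩
end

section
/- Define r_4(n,k,α) = 4^{k−1}·n − ((4^k − 1)/3)·α for positive integers n,k,α. Assume k ≥ 3, 4α − 3n ≥ 1, and 4·r_4(n,k,α) < k. If the statement 'there exists no quaternary Hermitian LCD [n,k,α] code with Hermitian dual distance ≥ 2' holds (as in Theorem 9 of Araya–Harada–Saito), then there exists no quaternary Hermitian LCD [n,k,α] code at all (with any Hermitian dual distance). -/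
open Finset Matrix

/-- `r₄(n,k,α) = 4^(k-1)·n - ((4^k - 1)/3)·α`, as an integer (the division is exact). -/
def r4 (n k α : ℕ) : ℤ := 4 ^ (k - 1) * (n : ℤ) - ((4 ^ k - 1) / 3) * (α : ℤ)


section AuxCounting

open Finset

variable {F : Type*} [Field F] [Fintype F] [DecidableEq F] {n : ℕ}

lemma wt_eq_card (x : Fin n → F) :
    wt x = (Finset.univ.filter fun i => x i ≠ 0).card := by
  rw [wt, Nat.card_eq_fintype_card, Fintype.card_subtype]

lemma counting {k : ℕ} (hk : 1 ≤ k) (C : Submodule F (Fin n → F))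
    (hdim : Module.finrank F C = k) {α : ℕ} (hmin : minWt C α) (i0 : Fin n)
    (hz : ∀ y ∈ C, y i0 = 0) :
    (Fintype.card F ^ k - 1) * α ≤
      (Fintype.card F ^ k - Fintype.card F ^ (k - 1)) * (n - 1) := by
  classical
  haveI : Fintype C := Fintype.ofFinite C
  set q := Fintype.card F with hq
  have hcard : Fintype.card C = q ^ k := by
    rw [Module.card_eq_pow_finrank (K := F), hdim]
  -- double counting
  have key : ∑ c : C, wt (c : Fin n → F)
      = ∑ i, (Finset.univ.filter fun c : C => (c : Fin n → F) i ≠ 0).card := by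
    simp_rw [wt_eq_card, Finset.card_filter]
    rw [Finset.sum_comm]
  -- lower bound on total weight
  have hlow : (q ^ k - 1) * α ≤ ∑ c : C, wt (c : Fin n → F) := by
    calc (q ^ k - 1) * α = ∑ _c ∈ Finset.univ.erase (0 : C), α := by
          rw [Finset.sum_const, Finset.card_erase_of_mem (Finset.mem_univ _),
            Finset.card_univ, hcard, smul_eq_mul]
      _ ≤ ∑ c ∈ Finset.univ.erase (0 : C), wt (c : Fin n → F) := by
          refine Finset.sum_le_sum fun c hc => ?_
          refine hmin.2 c c.2 fun h0 => Finset.ne_of_mem_erase hc (Subtype.ext ?_)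
          simpa using h0
      _ ≤ ∑ c : C, wt (c : Fin n → F) :=
          Finset.sum_le_sum_of_subset (Finset.erase_subset _ _)
  -- per-coordinate upper bound
  have hub : ∀ i : Fin n,
      (Finset.univ.filter fun c : C => (c : Fin n → F) i ≠ 0).card ≤ q ^ k - q ^ (k - 1) := by
    intro i
    set φ : C →ₗ[F] F := (LinearMap.proj i).comp C.subtype with hφ
    have hkercard : Fintype.card (LinearMap.ker φ)
        = (Finset.univ.filter fun c : C => (c : Fin n → F) i = 0).card := by
      rw [← Fintype.card_subtype]
      refine Fintype.card_congr (Equiv.subtypeEquivRight fun c => ?_)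
      simp [hφ, LinearMap.mem_ker]
    have hker : q ^ (k - 1) ≤ Fintype.card (LinearMap.ker φ) := by
      rw [Module.card_eq_pow_finrank (K := F)]
      refine Nat.pow_le_pow_right Fintype.card_pos ?_
      have h1 := LinearMap.finrank_range_add_finrank_ker φ
      have h2 : Module.finrank F (LinearMap.range φ) ≤ 1 := by
        simpa using Submodule.finrank_le (LinearMap.range φ)
      rw [hdim] at h1
      omega
    have hsplit := Finset.card_filter_add_card_filter_not
      (s := (Finset.univ : Finset C)) (p := fun c : C => (c : Fin n → F) i = 0)
    rw [Finset.card_univ, hcard] at hsplit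
    have hne : (Finset.univ.filter fun c : C => (c : Fin n → F) i ≠ 0)
        = (Finset.univ.filter fun c : C => ¬ (c : Fin n → F) i = 0) := rfl
    rw [hne]
    omega
  -- the special coordinate contributes nothing
  have h0 : (Finset.univ.filter fun c : C => (c : Fin n → F) i0 ≠ 0) = ∅ := by
    refine Finset.filter_eq_empty_iff.mpr fun c _ => ?_
    simpa using hz c c.2
  calc (q ^ k - 1) * α ≤ ∑ c : C, wt (c : Fin n → F) := hlow
    _ = ∑ i, (Finset.univ.filter fun c : C => (c : Fin n → F) i ≠ 0).card := key
    _ = ∑ i ∈ Finset.univ.erase i0,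
          (Finset.univ.filter fun c : C => (c : Fin n → F) i ≠ 0).card :=
          (Finset.sum_erase _ (by rw [h0, Finset.card_empty])).symm
    _ ≤ ∑ _i ∈ Finset.univ.erase i0, (q ^ k - q ^ (k - 1)) :=
          Finset.sum_le_sum fun i _ => hub i
    _ = (q ^ k - q ^ (k - 1)) * (n - 1) := by
          rw [Finset.sum_const, Finset.card_erase_of_mem (Finset.mem_univ _),
            Finset.card_univ, Fintype.card_fin, smul_eq_mul, Nat.mul_comm]

end AuxCounting

theorem stmt_14 (n k α : ℕ) (hn : 1 ≤ n) (hα : 1 ≤ α) (hk : 3 ≤ k)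
    (hna : 1 ≤ 4 * (α : ℤ) - 3 * (n : ℤ)) (hr : 4 * r4 n k α < (k : ℤ))
    (h : ¬ ∃ C : Submodule (GaloisField 2 2) (Fin n → GaloisField 2 2),
      Module.finrank (GaloisField 2 2) C = k ∧ IsHermLCD 2 C ∧ minWt C α ∧
      dualDistGeTwo 2 C) :
    ¬ ∃ C : Submodule (GaloisField 2 2) (Fin n → GaloisField 2 2),
      Module.finrank (GaloisField 2 2) C = k ∧ IsHermLCD 2 C ∧ minWt C α := by
  classical
  rintro ⟨C, hdim, hlcd, hmin⟩
  apply h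
  refine ⟨C, hdim, hlcd, hmin, ?_⟩
  intro x hx hx0
  by_contra hlt
  push_neg at hlt
  haveI : Fintype (GaloisField 2 2) := Fintype.ofFinite _
  -- x has weight exactly 1
  have hwt1 : (Finset.univ.filter fun i => x i ≠ 0).card = 1 := by
    rw [wt_eq_card] at hlt
    obtain ⟨i, hi⟩ := Function.ne_iff.mp hx0
    have hi' : x i ≠ 0 := by simpa using hi
    have : i ∈ Finset.univ.filter fun i => x i ≠ 0 := by
      simp [hi']
    have := Finset.card_pos.mpr ⟨i, this⟩
    omega
  obtain ⟨i0, hi0⟩ := Finset.card_eq_one.mp hwt1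
  have hxi0 : x i0 ≠ 0 := by
    have : i0 ∈ Finset.univ.filter fun i => x i ≠ 0 := hi0 ▸ Finset.mem_singleton_self i0
    exact (Finset.mem_filter.mp this).2
  have hxj : ∀ j : Fin n, j ≠ i0 → x j = 0 := by
    intro j hj
    by_contra hxj
    have : j ∈ Finset.univ.filter fun i => x i ≠ 0 := by simp [hxj]
    rw [hi0, Finset.mem_singleton] at this
    exact hj this
  -- every codeword vanishes at i0
  have hz : ∀ y ∈ C, y i0 = 0 := by
    intro y hy
    have h1 := hx y hy
    rw [hermInner] at h1
    rw [Finset.sum_eq_single i0 (fun j _ hj => by rw [hxj j hj, zero_mul])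
      (fun hmem => absurd (Finset.mem_univ i0) hmem)] at h1
    have := (mul_eq_zero.mp h1).resolve_left hxi0
    exact pow_eq_zero_iff (by norm_num) |>.mp this
  -- counting bound
  have hcF : Fintype.card (GaloisField 2 2) = 4 := by
    rw [← Nat.card_eq_fintype_card, GaloisField.card 2 2 (by norm_num)]
    norm_num
  have hcount := counting (by omega) C hdim hmin i0 hz
  rw [hcF] at hcount
  -- arithmetic contradiction
  have h4k : 4 ^ (k - 1) ≤ 4 ^ k := Nat.pow_le_pow_right (by norm_num) (Nat.sub_le k 1)
  have h1k : 1 ≤ 4 ^ k := Nat.one_le_pow _ _ (by norm_num)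
  zify [h4k, h1k, hn] at hcount
  have hdvd : (3 : ℤ) ∣ 4 ^ k - 1 := by
    simpa using sub_dvd_pow_sub_pow (4 : ℤ) 1 k
  have h3 : ((4 ^ k - 1 : ℤ) / 3) * 3 = 4 ^ k - 1 := Int.ediv_mul_cancel hdvd
  have hkp : (k : ℤ) < 4 ^ k := by
    exact_mod_cast (Nat.lt_pow_self (by norm_num) : k < 4 ^ k)
  have hpow : (4 : ℤ) ^ k = 4 * 4 ^ (k - 1) := by
    conv_lhs => rw [show k = (k - 1) + 1 by omega]
    ring
  rw [r4] at hr
  set E : ℤ := 4 ^ (k - 1) with hE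
  set D : ℤ := (4 ^ k - 1) / 3 with hD
  rw [hpow] at hcount hkp
  rw [hpow] at h3
  nlinarith [hr, hcount, hkp, h3, mul_le_mul_of_nonneg_left hcount (by norm_num : (0:ℤ) ≤ 4)]
end
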